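/- Let 0 < β < 1, 1 ≤ q < ∞ with βq > N, and suppose ψ ∈ L^q(ℝ^N) satisfies sup_{|h|>0} ‖δ_h ψ / |h|^β‖_{L^q(ℝ^N)} < ∞. Then for every 0 < α < β − N/q, ψ has a representative satisfying sup_{x≠y} |ψ(x)−ψ(y)|/|x−y|^α ≤ C ([ψ]_{N^{β,q}_∞})^{(αq+N)/(βq)} (‖ψ‖_{L^q})^{((β−α)q−N)/(βq)} for some constant C = C(N,q,α,β). -/

import Mathlib

open MeasureTheory

/-- The Besov–Nikolskii seminorm
`[ψ]_{N^{β,q}_∞(ℝ^N)} = sup_{|h|>0} ‖δ_h ψ/|h|^β‖_{L^q(ℝ^N)}` (valued in `ℝ≥0∞`). -/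
noncomputable def nikolskiiSemi {N : ℕ} (β : ℝ) (p : ENNReal)
    (ψ : EuclideanSpace ℝ (Fin N) → ℝ) : ENNReal :=
  ⨆ h : {h : EuclideanSpace ℝ (Fin N) // h ≠ 0},
    eLpNorm (fun x => (ψ (x + h.1) - ψ x) / ‖h.1‖ ^ β) p volume

section Aux

open Metric Filter Topology
open scoped ENNReal NNReal

variable {N : ℕ}

local notation "E" => EuclideanSpace ℝ (Fin N)

set_option maxHeartbeats 1000000 in
/-- Main work lemma, for a genuinely measurable function. -/
theorem morrey_key (β q : ℝ) (hβ : 0 < β) (hq : 1 ≤ q) (hβq : (N : ℝ) < β * q)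
    (φ : EuclideanSpace ℝ (Fin N) → ℝ) (hm : Measurable φ)
    (hφ : MemLp φ (ENNReal.ofReal q) volume)
    (hfin : nikolskiiSemi β (ENNReal.ofReal q) φ ≠ ⊤)
    (α : ℝ) (hα : 0 < α) (hαγ : α < β - N / q) :
    ∃ C > (0 : ℝ), ∃ ψ' : EuclideanSpace ℝ (Fin N) → ℝ,
      ψ' =ᵐ[volume] φ ∧
      ∀ x y, x ≠ y →
        |ψ' x - ψ' y|
          ≤ C * (nikolskiiSemi β (ENNReal.ofReal q) φ).toReal ^ ((α * q + N) / (β * q))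
            * (eLpNorm φ (ENNReal.ofReal q) volume).toReal ^ (((β - α) * q - N) / (β * q))
            * ‖x - y‖ ^ α := by
  have hq0 : (0:ℝ) < q := lt_of_lt_of_le one_pos hq
  have hexp : (0:ℝ) ≤ 1 - 1/q := by
    rw [sub_nonneg, div_le_one hq0]; exact hq
  have hnn : ∀ a b : ℝ, ‖a - b‖₊ = ‖b - a‖₊ := fun a b => by
    rw [← nnnorm_neg (a - b), neg_sub]
  have habs : ∀ a b : ℝ, |a - b| ≤ |a| + |b| := fun a b => by
    rw [sub_eq_add_neg]
    exact (abs_add_le a (-b)).trans (le_of_eq (by rw [abs_neg]))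
  set γ : ℝ := β - N / q with hγdef
  have hγpos : 0 < γ := lt_trans hα hαγ
  have hγα : 0 < γ - α := sub_pos.mpr hαγ
  have hp1 : (1:ℝ≥0∞) ≤ ENNReal.ofReal q := ENNReal.one_le_ofReal.mpr hq
  set Bnn := nikolskiiSemi β (ENNReal.ofReal q) φ with hBnn
  set B := Bnn.toReal with hBdef
  have hB0 : 0 ≤ B := ENNReal.toReal_nonneg
  set A := (eLpNorm φ (ENNReal.ofReal q) volume).toReal with hAdef
  have hA0 : 0 ≤ A := ENNReal.toReal_nonneg
  have hLq : eLpNorm φ (ENNReal.ofReal q) volume ≠ ⊤ := hφ.eLpNorm_ne_top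
  set c1 := volume (ball (0:E) 1) with hc1def
  have hc10 : c1 ≠ 0 := (measure_ball_pos _ _ one_pos).ne'
  have hc1T : c1 ≠ ⊤ := measure_ball_lt_top.ne
  set cN := c1.toReal with hcNdef
  have hcN : 0 < cN := ENNReal.toReal_pos hc10 hc1T
  have hVol : ∀ (x : E) (r : ℝ), 0 ≤ r →
      volume (closedBall x r) = ENNReal.ofReal (r ^ N) * c1 := by
    intro x r hr
    rw [Measure.addHaar_closedBall _ x hr, finrank_euclideanSpace_fin]
  have hVt : ∀ (x : E) (r : ℝ), 0 < r →
      (volume (closedBall x r)).toReal = r ^ N * cN := by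
    intro x r hr
    rw [hVol x r hr.le, ENNReal.toReal_mul, ENNReal.toReal_ofReal (pow_nonneg hr.le N)]
  have hVpos : ∀ (x : E) (r : ℝ), 0 < r → 0 < (volume (closedBall x r)).toReal := by
    intro x r hr
    rw [hVt x r hr]; exact mul_pos (pow_pos hr N) hcN
  have hloc : LocallyIntegrable φ volume := hφ.locallyIntegrable hp1
  have hInt : ∀ (x : E) (r : ℝ), IntegrableOn φ (closedBall x r) volume := fun x r =>
    hloc.integrableOn_isCompact (isCompact_closedBall x r)
  set F : ℝ → E → ℝ := fun r x => ⨍ z in closedBall x r, φ z with hFdef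
  -- averaging identity
  have havg : ∀ (c : ℝ) (z : E) (r : ℝ), 0 < r →
      c - F r z
        = (volume (closedBall z r)).toReal⁻¹ * ∫ v in closedBall z r, (c - φ v) := by
    intro c z r hr
    have hV0 : (volume (closedBall z r)).toReal ≠ 0 := (hVpos z r hr).ne'
    have hconst : IntegrableOn (fun _ : E => c) (closedBall z r) volume := by
      exact integrableOn_const measure_closedBall_lt_top.ne
    simp only [hFdef]
    rw [setAverage_eq (μ := volume), smul_eq_mul, integral_sub hconst (hInt z r),
      setIntegral_const, smul_eq_mul]
    simp only [measureReal_def]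
    field_simp
  -- Hölder L1 bound
  have hH : ∀ (f : E → ℝ), AEStronglyMeasurable f volume → ∀ s : Set E,
      ∫⁻ z in s, ‖f z‖₊ ∂volume
        ≤ (volume s) ^ (1 - 1/q) * eLpNorm f (ENNReal.ofReal q) volume := by
    intro f hf s
    have := eLpNorm_le_eLpNorm_mul_rpow_measure_univ (μ := volume.restrict s) hp1 hf.restrict
    rw [eLpNorm_one_eq_lintegral_enorm] at this
    refine this.trans ?_
    rw [Measure.restrict_apply_univ, mul_comm]
    have he : 1 / ENNReal.toReal 1 - 1 / (ENNReal.ofReal q).toReal = 1 - 1/q := by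
      simp [ENNReal.toReal_ofReal (by linarith : (0:ℝ) ≤ q)]
    rw [he]
    exact mul_le_mul_right (eLpNorm_mono_measure f Measure.restrict_le_self) _
  -- seminorm bound
  have hSemi : ∀ k : E, eLpNorm (fun v => φ (v + k) - φ v) (ENNReal.ofReal q) volume
      ≤ ENNReal.ofReal (‖k‖ ^ β) * Bnn := by
    intro k
    rcases eq_or_ne k 0 with rfl | hk
    · simp
    · have hc : 0 < ‖k‖ ^ β := Real.rpow_pos_of_pos (norm_pos_iff.mpr hk) β
      have h1 : (fun v : E => φ (v + k) - φ v)
          = (‖k‖ ^ β) • (fun v => (φ (v + k) - φ v) / ‖k‖ ^ β) := by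
        funext v; simp only [Pi.smul_apply, smul_eq_mul]; field_simp
      rw [h1, eLpNorm_const_smul]
      gcongr
      · rw [Real.enorm_of_nonneg hc.le]
      · exact le_iSup (fun h : {h : E // h ≠ 0} =>
          eLpNorm (fun x => (φ (x + h.1) - φ x) / ‖h.1‖ ^ β) (ENNReal.ofReal q) volume) ⟨k, hk⟩
  -- translation invariance
  have htrans : ∀ (g : E → ℝ≥0∞), Measurable g → ∀ (v x : E) (r : ℝ),
      ∫⁻ k in closedBall (x - v) r, g (v + k) ∂volume
        = ∫⁻ u in closedBall x r, g u ∂volume := by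
    intro g hg v x r
    have hmp : MeasurePreserving (fun k : E => v + k) volume volume :=
      measurePreserving_add_left volume v
    have hpre : (fun k : E => v + k) ⁻¹' closedBall x r = closedBall (x - v) r := by
      ext k
      simp only [Set.mem_preimage, mem_closedBall, dist_eq_norm]
      constructor <;> intro h <;>
        · convert h using 2
          abel
    rw [← hpre]
    exact hmp.setLIntegral_comp_preimage measurableSet_closedBall hg
  have hprod : Measurable (fun p : E × E => (‖φ (p.1 + p.2) - φ p.1‖₊ : ℝ≥0∞)) :=
    ((hm.comp (measurable_fst.add measurable_snd)).sub
      (hm.comp measurable_fst)).nnnorm.coe_nnreal_ennreal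
  have hgm : Measurable (fun u : E => (‖φ u‖₊ : ℝ≥0∞)) := hm.nnnorm.coe_nnreal_ennreal
  have hTmeas : ∀ ρ : ℝ, Measurable
      (fun v : E => ∫⁻ k in closedBall (0:E) ρ, ‖φ (v + k) - φ v‖₊ ∂volume) := by
    intro ρ
    exact Measurable.lintegral_prod_right (f := fun v k => (‖φ (v + k) - φ v‖₊ : ℝ≥0∞)) hprod
  -- finiteness of the inner lintegral
  have hTfin : ∀ (v : E) (ρ : ℝ),
      (∫⁻ k in closedBall (0:E) ρ, ‖φ (v + k) - φ v‖₊ ∂volume) ≠ ⊤ := by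
    intro v ρ
    have hb : ∀ k : E, (‖φ (v + k) - φ v‖₊ : ℝ≥0∞) ≤ ‖φ (v + k)‖₊ + ‖φ v‖₊ := by
      intro k; exact_mod_cast nnnorm_sub_le _ _
    have h1 : ∫⁻ k in closedBall (0:E) ρ, ‖φ (v + k) - φ v‖₊ ∂volume
        ≤ ∫⁻ k in closedBall (0:E) ρ, (‖φ (v + k)‖₊ + ‖φ v‖₊) ∂volume :=
      lintegral_mono fun k => hb k
    have h2 : ∫⁻ k in closedBall (0:E) ρ, ((‖φ (v + k)‖₊ : ℝ≥0∞) + ‖φ v‖₊) ∂volume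
        = (∫⁻ k in closedBall (0:E) ρ, ‖φ (v + k)‖₊ ∂volume)
          + (∫⁻ _ in closedBall (0:E) ρ, (‖φ v‖₊ : ℝ≥0∞) ∂volume) := by
      exact lintegral_add_right _ measurable_const
    have h3 : ∫⁻ k in closedBall (0:E) ρ, ‖φ (v + k)‖₊ ∂volume
        = ∫⁻ u in closedBall v ρ, ‖φ u‖₊ ∂volume := by
      have := htrans (fun u => (‖φ u‖₊ : ℝ≥0∞)) hgm v v ρ
      simpa using this
    have h4 : ∫⁻ u in closedBall v ρ, ‖φ u‖₊ ∂volume ≠ ⊤ := by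
      refine ne_top_of_le_ne_top ?_ (hH φ hm.aestronglyMeasurable (closedBall v ρ))
      exact ENNReal.mul_ne_top
        (ENNReal.rpow_ne_top_of_nonneg hexp
          measure_closedBall_lt_top.ne) hLq
    have h5 : (∫⁻ _ in closedBall (0:E) ρ, (‖φ v‖₊ : ℝ≥0∞) ∂volume) ≠ ⊤ := by
      rw [setLIntegral_const]
      exact ENNReal.mul_ne_top ENNReal.coe_ne_top measure_closedBall_lt_top.ne
    refine ne_top_of_le_ne_top ?_ h1
    rw [h2, h3]
    exact ENNReal.add_ne_top.mpr ⟨h4, h5⟩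
  -- pointwise bound
  have hPt : ∀ (x v : E) (r ρ : ℝ), 0 < r → closedBall (x - v) r ⊆ closedBall (0:E) ρ →
      |F r x - φ v| ≤ ((volume (closedBall x r)).toReal)⁻¹
        * (∫⁻ k in closedBall (0:E) ρ, ‖φ (v + k) - φ v‖₊ ∂volume).toReal := by
    intro x v r ρ hr hsub
    have hVinv0 : 0 ≤ ((volume (closedBall x r)).toReal)⁻¹ :=
      inv_nonneg.mpr ENNReal.toReal_nonneg
    have e1 : φ v - F r x = (volume (closedBall x r)).toReal⁻¹
        * ∫ u in closedBall x r, (φ v - φ u) := havg (φ v) x r hr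
    have e2 : |F r x - φ v| = ((volume (closedBall x r)).toReal)⁻¹
        * |∫ u in closedBall x r, (φ v - φ u)| := by
      rw [abs_sub_comm, e1, abs_mul, abs_of_nonneg hVinv0]
    rw [e2]
    refine mul_le_mul_of_nonneg_left ?_ hVinv0
    have e3 : |∫ u in closedBall x r, (φ v - φ u)|
        ≤ (∫⁻ u in closedBall x r, ‖φ v - φ u‖₊ ∂volume).toReal := by
      have := norm_integral_le_lintegral_norm (μ := volume.restrict (closedBall x r))
        (fun u => φ v - φ u)
      rw [Real.norm_eq_abs] at this
      refine this.trans (le_of_eq ?_)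
      congr 1
      exact lintegral_congr fun u => ofReal_norm _
    refine e3.trans ?_
    have e4 : ∫⁻ u in closedBall x r, ‖φ v - φ u‖₊ ∂volume
        = ∫⁻ k in closedBall (x - v) r, ‖φ (v + k) - φ v‖₊ ∂volume := by
      rw [htrans (fun u => (‖φ u - φ v‖₊ : ℝ≥0∞)) ((hm.sub measurable_const).nnnorm.coe_nnreal_ennreal) v x r]
      exact lintegral_congr fun u => by rw [hnn]
    rw [e4]
    exact ENNReal.toReal_mono (hTfin v ρ) (lintegral_mono_set hsub)
  -- swapped double bound
  have hT : ∀ (y : E) (s ρ : ℝ), 0 < s → 0 ≤ ρ →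
      ∫⁻ v in closedBall y s,
          (∫⁻ k in closedBall (0:E) ρ, ‖φ (v + k) - φ v‖₊ ∂volume) ∂volume
        ≤ volume (closedBall (0:E) ρ)
          * ((volume (closedBall y s)) ^ (1 - 1/q) * (ENNReal.ofReal (ρ ^ β) * Bnn)) := by
    intro y s ρ hs hρ
    have hswap : ∫⁻ v in closedBall y s,
          (∫⁻ k in closedBall (0:E) ρ, ‖φ (v + k) - φ v‖₊ ∂volume) ∂volume
        = ∫⁻ k in closedBall (0:E) ρ,
          (∫⁻ v in closedBall y s, ‖φ (v + k) - φ v‖₊ ∂volume) ∂volume :=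
      lintegral_lintegral_swap hprod.aemeasurable
    rw [hswap]
    have hinner : ∀ k ∈ closedBall (0:E) ρ,
        (∫⁻ v in closedBall y s, ‖φ (v + k) - φ v‖₊ ∂volume)
          ≤ (volume (closedBall y s)) ^ (1 - 1/q) * (ENNReal.ofReal (ρ ^ β) * Bnn) := by
      intro k hk
      have h1 := hH (fun v => φ (v + k) - φ v)
        ((hm.comp (measurable_add_const k)).sub hm).aestronglyMeasurable (closedBall y s)
      refine h1.trans ?_
      refine mul_le_mul_right ?_ _
      refine (hSemi k).trans ?_
      refine mul_le_mul_left ?_ _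
      refine ENNReal.ofReal_le_ofReal ?_
      refine Real.rpow_le_rpow (norm_nonneg k) ?_ hβ.le
      simpa [mem_closedBall, dist_eq_norm] using hk
    calc ∫⁻ k in closedBall (0:E) ρ,
          (∫⁻ v in closedBall y s, ‖φ (v + k) - φ v‖₊ ∂volume) ∂volume
        ≤ ∫⁻ _ in closedBall (0:E) ρ,
            ((volume (closedBall y s)) ^ (1 - 1/q) * (ENNReal.ofReal (ρ ^ β) * Bnn)) ∂volume :=
          setLIntegral_mono measurable_const hinner
      _ = volume (closedBall (0:E) ρ)
            * ((volume (closedBall y s)) ^ (1 - 1/q) * (ENNReal.ofReal (ρ ^ β) * Bnn)) := by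
          rw [setLIntegral_const, mul_comm]
  -- MASTER estimate
  have hMaster : ∀ (x y : E) (r s : ℝ), 0 < r → 0 < s →
      |F r x - F s y| ≤ (s ^ N * cN)⁻¹ * ((r ^ N * cN)⁻¹
        * (((‖x - y‖ + r + s) ^ N * cN)
          * ((s ^ N * cN) ^ ((1:ℝ) - 1/q) * ((‖x - y‖ + r + s) ^ β * B)))) := by
    intro x y r s hr hs
    set d := ‖x - y‖ with hd
    have hd0 : 0 ≤ d := norm_nonneg _
    set ρ := d + r + s with hρdef
    have hρpos : 0 < ρ := by rw [hρdef]; linarith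
    set T : E → ℝ≥0∞ :=
      fun v => ∫⁻ k in closedBall (0:E) ρ, ‖φ (v + k) - φ v‖₊ ∂volume with hTdef
    -- step 1 & 2
    have hVys := hVpos y s hs
    have hVxr := hVpos x r hr
    have e1 : F r x - F s y = (volume (closedBall y s)).toReal⁻¹
        * ∫ v in closedBall y s, (F r x - φ v) := havg (F r x) y s hs
    have e2 : |F r x - F s y| ≤ (volume (closedBall y s)).toReal⁻¹
        * (∫⁻ v in closedBall y s, ENNReal.ofReal |F r x - φ v| ∂volume).toReal := by
      rw [e1, abs_mul,
        abs_of_nonneg (inv_nonneg.mpr ENNReal.toReal_nonneg :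
          (0:ℝ) ≤ (volume (closedBall y s)).toReal⁻¹)]
      refine mul_le_mul_of_nonneg_left ?_ (inv_nonneg.mpr ENNReal.toReal_nonneg)
      have hni := norm_integral_le_lintegral_norm (μ := volume.restrict (closedBall y s))
        (fun v => F r x - φ v)
      simp only [Real.norm_eq_abs] at hni
      exact hni
    -- step 3 : pointwise
    have e3 : ∀ v ∈ closedBall y s,
        ENNReal.ofReal |F r x - φ v| ≤ (volume (closedBall x r))⁻¹ * T v := by
      intro v hv
      have hsub : closedBall (x - v) r ⊆ closedBall (0:E) ρ := by
        intro k hkmem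
        simp only [mem_closedBall, dist_eq_norm, sub_zero] at hkmem ⊢
        have h1 : ‖x - v‖ ≤ d + s := by
          have : x - v = (x - y) + (y - v) := by abel
          rw [this]
          refine (norm_add_le _ _).trans ?_
          have : ‖y - v‖ ≤ s := by
            rw [norm_sub_rev]
            simpa [mem_closedBall, dist_eq_norm] using hv
          linarith
        calc ‖k‖ = ‖(k - (x - v)) + (x - v)‖ := by congr 1; abel
          _ ≤ ‖k - (x - v)‖ + ‖x - v‖ := norm_add_le _ _
          _ ≤ r + (d + s) := add_le_add hkmem h1
          _ = ρ := by rw [hρdef]; ring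
      have h5 := hPt x v r ρ hr hsub
      calc ENNReal.ofReal |F r x - φ v|
          ≤ ENNReal.ofReal (((volume (closedBall x r)).toReal)⁻¹ * (T v).toReal) :=
            ENNReal.ofReal_le_ofReal h5
        _ = (volume (closedBall x r))⁻¹ * T v := by
            rw [ENNReal.ofReal_mul (inv_nonneg.mpr ENNReal.toReal_nonneg)]
            congr 1
            · rw [ENNReal.ofReal_inv_of_pos hVxr,
                ENNReal.ofReal_toReal measure_closedBall_lt_top.ne]
            · exact ENNReal.ofReal_toReal (hTfin v ρ)
    -- step 4 : integrate
    have e4 : ∫⁻ v in closedBall y s, ENNReal.ofReal |F r x - φ v| ∂volume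
        ≤ (volume (closedBall x r))⁻¹ * (volume (closedBall (0:E) ρ)
          * ((volume (closedBall y s)) ^ (1 - 1/q) * (ENNReal.ofReal (ρ ^ β) * Bnn))) := by
      calc ∫⁻ v in closedBall y s, ENNReal.ofReal |F r x - φ v| ∂volume
          ≤ ∫⁻ v in closedBall y s, (volume (closedBall x r))⁻¹ * T v ∂volume :=
            setLIntegral_mono (by
              exact Measurable.const_mul (hTmeas ρ) _) e3
        _ = (volume (closedBall x r))⁻¹ * ∫⁻ v in closedBall y s, T v ∂volume :=
            lintegral_const_mul _ (hTmeas ρ)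
        _ ≤ _ := by
            refine mul_le_mul_right ?_ _
            exact hT y s ρ hs hρpos.le
    -- step 5 : put together, toReal
    have hfinRHS : (volume (closedBall x r))⁻¹ * (volume (closedBall (0:E) ρ)
          * ((volume (closedBall y s)) ^ (1 - 1/q) * (ENNReal.ofReal (ρ ^ β) * Bnn))) ≠ ⊤ := by
      refine ENNReal.mul_ne_top ?_ (ENNReal.mul_ne_top measure_closedBall_lt_top.ne
        (ENNReal.mul_ne_top (ENNReal.rpow_ne_top_of_nonneg hexp
          measure_closedBall_lt_top.ne)
          (ENNReal.mul_ne_top ENNReal.ofReal_ne_top hfin)))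
      simp [ENNReal.inv_ne_top]
      exact (measure_closedBall_pos volume x hr).ne'
    have e5 : |F r x - F s y| ≤ (volume (closedBall y s)).toReal⁻¹
        * ((volume (closedBall x r))⁻¹ * (volume (closedBall (0:E) ρ)
          * ((volume (closedBall y s)) ^ (1 - 1/q)
            * (ENNReal.ofReal (ρ ^ β) * Bnn)))).toReal := by
      refine e2.trans ?_
      refine mul_le_mul_of_nonneg_left ?_ (inv_nonneg.mpr ENNReal.toReal_nonneg)
      exact ENNReal.toReal_mono hfinRHS e4
    refine e5.trans (le_of_eq ?_)
    rw [ENNReal.toReal_mul, ENNReal.toReal_mul, ENNReal.toReal_mul, ENNReal.toReal_mul,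
      ENNReal.toReal_inv, ← ENNReal.toReal_rpow,
      ENNReal.toReal_ofReal (Real.rpow_nonneg hρpos.le β),
      hVt x r hr, hVt y s hs, hVt 0 ρ hρpos]
    try rw [← hBdef]
    try ring
  -- auxiliary rpow algebra
  have haux : ∀ a : ℝ, 0 < a → a⁻¹ * a ^ ((1:ℝ) - 1/q) = a ^ (-(1/q):ℝ) := by
    intro a ha
    rw [← Real.rpow_neg_one a, ← Real.rpow_add ha]
    congr 1; ring
  have hsplit : ∀ t : ℝ, 0 < t →
      (t ^ N * cN) ^ (-(1/q):ℝ) = t ^ (-((N:ℝ)/q)) * cN ^ (-(1/q):ℝ) := by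
    intro t ht
    rw [Real.mul_rpow (pow_nonneg ht.le N) hcN.le, ← Real.rpow_natCast t N,
      ← Real.rpow_mul ht.le]
    congr 2; ring
  -- digested estimate
  set K₁ : ℝ := 6 ^ N * 3 ^ β * cN ^ (-(1/q):ℝ) with hK₁def
  have hK₁pos : 0 < K₁ := by
    have h3 : (0:ℝ) < 3 ^ β := Real.rpow_pos_of_pos (by norm_num) β
    have hc : (0:ℝ) < cN ^ (-(1/q):ℝ) := Real.rpow_pos_of_pos hcN _
    exact mul_pos (mul_pos (pow_pos (by norm_num) N) h3) hc
  have hDig : ∀ (x y : E) (u t : ℝ), 0 < u → u ≤ t → t ≤ 2 * u → ‖x - y‖ ≤ t →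
      |F u x - F t y| ≤ K₁ * t ^ γ * B := by
    intro x y u t hu hut ht2u hdt
    have ht : 0 < t := lt_of_lt_of_le hu hut
    set d := ‖x - y‖ with hd
    have hd0 : 0 ≤ d := norm_nonneg _
    set ρ := d + u + t with hρdef
    have hρpos : 0 < ρ := by rw [hρdef]; linarith
    have hρ3t : ρ ≤ 3 * t := by rw [hρdef]; linarith
    refine (hMaster x y u t hu ht).trans ?_
    have expand : (t ^ N * cN)⁻¹ * ((u ^ N * cN)⁻¹
          * ((ρ ^ N * cN) * ((t ^ N * cN) ^ ((1:ℝ) - 1/q) * (ρ ^ β * B))))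
        = (t ^ N * cN) ^ (-(1/q):ℝ) * ((ρ / u) ^ N * (ρ ^ β * B)) := by
      have h1 : (t ^ N * cN)⁻¹ * (t ^ N * cN) ^ ((1:ℝ) - 1/q)
          = (t ^ N * cN) ^ (-(1/q):ℝ) := haux _ (mul_pos (pow_pos ht N) hcN)
      have h2 : (u ^ N * cN)⁻¹ * (ρ ^ N * cN) = (ρ / u) ^ N := by
        have h3 : (u:ℝ) ^ N ≠ 0 := pow_ne_zero N hu.ne'
        have h4 : cN ≠ 0 := hcN.ne'
        rw [div_pow]
        field_simp
        try ring
      calc (t ^ N * cN)⁻¹ * ((u ^ N * cN)⁻¹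
            * ((ρ ^ N * cN) * ((t ^ N * cN) ^ ((1:ℝ) - 1/q) * (ρ ^ β * B))))
          = ((t ^ N * cN)⁻¹ * (t ^ N * cN) ^ ((1:ℝ) - 1/q))
            * (((u ^ N * cN)⁻¹ * (ρ ^ N * cN)) * (ρ ^ β * B)) := by ring
        _ = _ := by rw [h1, h2]
    rw [expand]
    have h6 : (ρ / u) ^ N ≤ 6 ^ N := by
      refine pow_le_pow_left₀ (div_nonneg hρpos.le hu.le) ?_ N
      rw [div_le_iff₀ hu]
      linarith
    have hρβ : ρ ^ β ≤ 3 ^ β * t ^ β := by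
      rw [← Real.mul_rpow (by norm_num) ht.le]
      exact Real.rpow_le_rpow hρpos.le hρ3t hβ.le
    have hfac : (0:ℝ) ≤ (t ^ N * cN) ^ (-(1/q):ℝ) :=
      Real.rpow_nonneg (mul_pos (pow_pos ht N) hcN).le _
    calc (t ^ N * cN) ^ (-(1/q):ℝ) * ((ρ / u) ^ N * (ρ ^ β * B))
        ≤ (t ^ N * cN) ^ (-(1/q):ℝ) * (6 ^ N * ((3 ^ β * t ^ β) * B)) := by
          refine mul_le_mul_of_nonneg_left ?_ hfac
          refine mul_le_mul h6 (mul_le_mul_of_nonneg_right hρβ hB0)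
            (mul_nonneg (Real.rpow_nonneg hρpos.le β) hB0) ?_
          exact pow_nonneg (by norm_num) N
      _ = K₁ * t ^ γ * B := by
          rw [hsplit t ht, hK₁def]
          have htγ : t ^ γ = t ^ β * t ^ (-((N:ℝ)/q)) := by
            rw [hγdef, show β - (N:ℝ)/q = β + (-((N:ℝ)/q)) from by ring,
              Real.rpow_add ht]
          rw [htγ]
          ring
  -- global comparison of concentric averages
  have h2γlt : ((1:ℝ)/2) ^ γ < 1 := Real.rpow_lt_one (by norm_num) (by norm_num) hγpos
  have h2γ0 : (0:ℝ) ≤ ((1:ℝ)/2) ^ γ := Real.rpow_nonneg (by norm_num) _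
  set K₂ : ℝ := K₁ / (1 - ((1:ℝ)/2) ^ γ) with hK₂def
  have hden : 0 < 1 - ((1:ℝ)/2) ^ γ := by linarith
  have hK₂pos : 0 < K₂ := div_pos hK₁pos hden
  have hK₁K₂ : K₁ ≤ K₂ := by
    rw [hK₂def, le_div_iff₀ hden]
    have h0 : 0 ≤ K₁ * ((1:ℝ)/2) ^ γ := mul_nonneg hK₁pos.le h2γ0
    linarith
  have hGlobal : ∀ (x : E) (u t : ℝ), 0 < u → u ≤ t → |F u x - F t x| ≤ K₂ * t ^ γ * B := by
    have claim : ∀ m : ℕ, ∀ (x : E) (u t : ℝ), 0 < u → u ≤ t → t ≤ 2 ^ m * (2 * u) →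
        |F u x - F t x| ≤ K₂ * t ^ γ * B := by
      intro m
      induction m with
      | zero =>
        intro x u t hu hut h2
        refine (hDig x x u t hu hut (by simpa using h2)
          (by simpa using (lt_of_lt_of_le hu hut).le)).trans ?_
        have : (0:ℝ) ≤ t ^ γ * B :=
          mul_nonneg (Real.rpow_nonneg (lt_of_lt_of_le hu hut).le _) hB0
        calc K₁ * t ^ γ * B = K₁ * (t ^ γ * B) := by ring
          _ ≤ K₂ * (t ^ γ * B) := mul_le_mul_of_nonneg_right hK₁K₂ this
          _ = K₂ * t ^ γ * B := by ring
      | succ m ih =>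
        intro x u t hu hut h2
        have ht : 0 < t := lt_of_lt_of_le hu hut
        by_cases hcase : t ≤ 2 * u
        · refine (hDig x x u t hu hut hcase (by simpa using ht.le)).trans ?_
          have : (0:ℝ) ≤ t ^ γ * B := mul_nonneg (Real.rpow_nonneg ht.le _) hB0
          calc K₁ * t ^ γ * B = K₁ * (t ^ γ * B) := by ring
            _ ≤ K₂ * (t ^ γ * B) := mul_le_mul_of_nonneg_right hK₁K₂ this
            _ = K₂ * t ^ γ * B := by ring
        · push_neg at hcase
          have hu2 : u ≤ t / 2 := by linarith
          have hth : t / 2 ≤ 2 ^ m * (2 * u) := by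
            rw [pow_succ] at h2
            linarith
          have step1 : |F u x - F (t/2) x| ≤ K₂ * (t/2) ^ γ * B :=
            ih x u (t/2) hu hu2 hth
          have step2 : |F (t/2) x - F t x| ≤ K₁ * t ^ γ * B :=
            hDig x x (t/2) t (by linarith) (by linarith) (by linarith) (by simpa using ht.le)
          have tri : |F u x - F t x| ≤ |F u x - F (t/2) x| + |F (t/2) x - F t x| := by
            calc |F u x - F t x|
                = |(F u x - F (t/2) x) + (F (t/2) x - F t x)| := by
                  congr 1; ring
              _ ≤ _ := abs_add_le _ _
          have hhalf : (t/2) ^ γ = t ^ γ * ((1:ℝ)/2) ^ γ := by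
            rw [div_eq_mul_inv, Real.mul_rpow ht.le (by norm_num)]
            norm_num
          refine tri.trans ?_
          refine (add_le_add step1 step2).trans ?_
          rw [hhalf]
          have htγ0 : (0:ℝ) ≤ t ^ γ := Real.rpow_nonneg ht.le _
          have key : K₂ * ((1:ℝ)/2) ^ γ + K₁ ≤ K₂ := by
            have hKden : K₂ * (1 - ((1:ℝ)/2) ^ γ) = K₁ := by
              rw [hK₂def]
              field_simp
            nlinarith [hKden]
          rw [show K₂ * (t ^ γ * ((1:ℝ)/2) ^ γ) * B + K₁ * t ^ γ * B
              = (K₂ * ((1:ℝ)/2) ^ γ + K₁) * (t ^ γ * B) from by ring]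
          calc (K₂ * ((1:ℝ)/2) ^ γ + K₁) * (t ^ γ * B)
              ≤ K₂ * (t ^ γ * B) :=
                mul_le_mul_of_nonneg_right key (mul_nonneg htγ0 hB0)
            _ = K₂ * t ^ γ * B := by ring
    intro x u t hu hut
    obtain ⟨m, hm⟩ : ∃ m : ℕ, t / (2 * u) < 2 ^ m :=
      pow_unbounded_of_one_lt (t / (2 * u)) one_lt_two
    refine claim m x u t hu hut ?_
    rw [div_lt_iff₀ (by linarith : (0:ℝ) < 2 * u)] at hm
    linarith
  -- the dyadic sequence and its limit
  set t : ℕ → ℝ := fun n => ((1:ℝ)/2) ^ n with htdef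
  have htpos : ∀ n, 0 < t n := fun n => by positivity
  have htanti : ∀ n m : ℕ, n ≤ m → t m ≤ t n := fun n m h =>
    pow_le_pow_of_le_one (by norm_num) (by norm_num) h
  have htγgeom : ∀ n : ℕ, (t n) ^ γ = (((1:ℝ)/2) ^ γ) ^ n := by
    intro n
    simp only [htdef]
    rw [← Real.rpow_natCast ((1:ℝ)/2) n, ← Real.rpow_mul (by norm_num),
      ← Real.rpow_natCast (((1:ℝ)/2) ^ γ) n, ← Real.rpow_mul (by norm_num)]
    congr 1; ring
  have hcauchy : ∀ x : E, ∃ L : ℝ, Tendsto (fun n => F (t n) x) atTop (𝓝 L) := by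
    intro x
    refine cauchySeq_tendsto_of_complete ?_
    refine cauchySeq_of_le_tendsto_0 (fun n => K₂ * (t n) ^ γ * B) ?_ ?_
    · intro n m NN hn hm
      have hstep : ∀ a b : ℕ, NN ≤ a → a ≤ b → dist (F (t a) x) (F (t b) x) ≤ K₂ * (t NN) ^ γ * B := by
        intro a b ha hab
        have h1 : |F (t b) x - F (t a) x| ≤ K₂ * (t a) ^ γ * B :=
          hGlobal x (t b) (t a) (htpos b) (htanti a b hab)
        have h2 : (t a) ^ γ ≤ (t NN) ^ γ :=
          Real.rpow_le_rpow (htpos a).le (htanti NN a ha) hγpos.le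
        have h3 : K₂ * (t a) ^ γ * B ≤ K₂ * (t NN) ^ γ * B :=
          mul_le_mul_of_nonneg_right (mul_le_mul_of_nonneg_left h2 hK₂pos.le) hB0
        rw [Real.dist_eq, abs_sub_comm]
        exact h1.trans h3
      rcases le_total n m with h | h
      · exact hstep n m hn h
      · rw [dist_comm]
        exact hstep m n hm h
    · have : Tendsto (fun NN : ℕ => (((1:ℝ)/2) ^ γ) ^ NN) atTop (𝓝 0) :=
        tendsto_pow_atTop_nhds_zero_of_lt_one h2γ0 h2γlt
      have h2 : Tendsto (fun NN : ℕ => K₂ * (((1:ℝ)/2) ^ γ) ^ NN * B) atTop (𝓝 0) := by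
        have := (this.const_mul K₂).mul_const B
        simpa using this
      refine h2.congr fun NN => ?_
      rw [htγgeom]
  choose ψ' hψ' using hcauchy
  -- distance to the limit
  have hEst1 : ∀ (x : E) (r : ℝ), 0 < r → |ψ' x - F r x| ≤ K₂ * r ^ γ * B := by
    intro x r hr
    have hlim : Tendsto (fun n => |F (t n) x - F r x|) atTop (𝓝 |ψ' x - F r x|) :=
      ((hψ' x).sub_const (F r x)).abs
    refine le_of_tendsto hlim ?_
    have hev : ∀ᶠ n in atTop, t n ≤ r := by
      have h0 : Tendsto t atTop (𝓝 0) :=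
        tendsto_pow_atTop_nhds_zero_of_lt_one (by norm_num) (by norm_num)
      exact h0.eventually (eventually_le_nhds hr)
    filter_upwards [hev] with n hn
    exact hGlobal x (t n) r (htpos n) hn
  -- a.e. equality
  have hAE : ψ' =ᵐ[volume] φ := by
    have hbesi := IsUnifLocDoublingMeasure.ae_tendsto_average
      (μ := (volume : Measure E)) hloc 1
    filter_upwards [hbesi] with x hx
    have hxlim : Tendsto (fun n => F (t n) x) atTop (𝓝 (φ x)) := by
      have := hx (fun _ => x) t
        (tendsto_nhdsWithin_of_tendsto_nhds_of_eventually_within _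
          (tendsto_pow_atTop_nhds_zero_of_lt_one (by norm_num) (by norm_num))
          (Eventually.of_forall fun j => Set.mem_Ioi.mpr (htpos j)))
        (Eventually.of_forall fun j => by
          simp only [mem_closedBall, dist_self, one_mul]
          exact (htpos j).le)
      exact this
    exact tendsto_nhds_unique (hψ' x) hxlim
  -- size bound on averages
  have hEst3 : ∀ (x : E) (r : ℝ), 0 < r → |F r x| ≤ ((r ^ N * cN) ^ (-(1/q):ℝ)) * A := by
    intro x r hr
    have hVxr := hVpos x r hr
    have e1 : |F r x| = (volume (closedBall x r)).toReal⁻¹ * |∫ v in closedBall x r, φ v| := by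
      simp only [hFdef]
      rw [setAverage_eq (μ := volume), smul_eq_mul, abs_mul, measureReal_def,
        abs_of_nonneg (inv_nonneg.mpr ENNReal.toReal_nonneg)]
    have e2 : |∫ v in closedBall x r, φ v|
        ≤ ((volume (closedBall x r)) ^ (1 - 1/q)
          * eLpNorm φ (ENNReal.ofReal q) volume).toReal := by
      have h1 := norm_integral_le_lintegral_norm (μ := volume.restrict (closedBall x r)) φ
      rw [Real.norm_eq_abs] at h1
      refine h1.trans ?_
      have h2 : ∫⁻ v in closedBall x r, ENNReal.ofReal ‖φ v‖ ∂volume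
          = ∫⁻ v in closedBall x r, ‖φ v‖₊ ∂volume :=
        lintegral_congr fun v => ofReal_norm _
      rw [h2]
      refine ENNReal.toReal_mono ?_ (hH φ hm.aestronglyMeasurable (closedBall x r))
      exact ENNReal.mul_ne_top (ENNReal.rpow_ne_top_of_nonneg hexp
        measure_closedBall_lt_top.ne) hLq
    rw [e1]
    have e3 : ((volume (closedBall x r)) ^ (1 - 1/q)
        * eLpNorm φ (ENNReal.ofReal q) volume).toReal
          = (r ^ N * cN) ^ ((1:ℝ) - 1/q) * A := by
      rw [ENNReal.toReal_mul, ← ENNReal.toReal_rpow, hVt x r hr, ← hAdef]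
    calc (volume (closedBall x r)).toReal⁻¹ * |∫ v in closedBall x r, φ v|
        ≤ (volume (closedBall x r)).toReal⁻¹ * ((r ^ N * cN) ^ ((1:ℝ) - 1/q) * A) := by
          refine mul_le_mul_of_nonneg_left ?_ (inv_nonneg.mpr ENNReal.toReal_nonneg)
          rw [← e3]; exact e2
      _ = ((r ^ N * cN) ^ (-(1/q):ℝ)) * A := by
          rw [hVt x r hr, ← mul_assoc, haux _ (mul_pos (pow_pos hr N) hcN)]
  -- FINAL assembly
  set e1 : ℝ := (α * q + N) / (β * q) with he1def
  set e2 : ℝ := ((β - α) * q - N) / (β * q) with he2def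
  have he2 : e2 = (γ - α) / β := by
    rw [he2def, hγdef]
    field_simp
    try ring
  have hsum : e1 + e2 = 1 := by
    rw [he1def, he2def]
    field_simp
    try ring
  have he1pos : 0 < e1 := by
    rw [he1def]
    have hαq : 0 < α * q := mul_pos hα hq0
    have hN0 : (0:ℝ) ≤ N := Nat.cast_nonneg N
    exact div_pos (by linarith) (mul_pos hβ hq0)
  set K₃ : ℝ := 2 * K₂ + K₁ with hK₃def
  set K₄ : ℝ := 2 * K₂ + 2 * cN ^ (-(1/q):ℝ) with hK₄def
  have hcNq : 0 < cN ^ (-(1/q):ℝ) := Real.rpow_pos_of_pos hcN _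
  have hK₃pos : 0 < K₃ := by rw [hK₃def]; linarith
  have hK₄pos : 0 < K₄ := by rw [hK₄def]; linarith
  refine ⟨K₃ + K₄, by linarith, ψ', hAE, ?_⟩
  intro x y hxy
  set d := ‖x - y‖ with hddef
  have hd : 0 < d := norm_pos_iff.mpr (sub_ne_zero.mpr hxy)
  -- oscillation bound at scale d
  have hOSC : |ψ' x - ψ' y| ≤ K₃ * d ^ γ * B := by
    have h1 : |ψ' x - F d x| ≤ K₂ * d ^ γ * B := hEst1 x d hd
    have h2 : |ψ' y - F d y| ≤ K₂ * d ^ γ * B := hEst1 y d hd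
    have h3 : |F d x - F d y| ≤ K₁ * d ^ γ * B := hDig x y d d hd le_rfl (by linarith) le_rfl
    have tri : |ψ' x - ψ' y| ≤ |ψ' x - F d x| + |F d x - F d y| + |ψ' y - F d y| := by
      calc |ψ' x - ψ' y|
          = |(ψ' x - F d x) + (F d x - F d y) + (F d y - ψ' y)| := by congr 1; ring
        _ ≤ |(ψ' x - F d x) + (F d x - F d y)| + |F d y - ψ' y| := abs_add_le _ _
        _ ≤ |ψ' x - F d x| + |F d x - F d y| + |F d y - ψ' y| := by
            gcongr
            exact abs_add_le _ _
        _ = |ψ' x - F d x| + |F d x - F d y| + |ψ' y - F d y| := by rw [abs_sub_comm (F d y)]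
    refine tri.trans ?_
    rw [hK₃def]
    linarith
  by_cases hB : B = 0
  · -- zero seminorm
    have hRHS : (K₃ + K₄) * B ^ e1 * A ^ e2 * d ^ α = 0 := by
      rw [hB, Real.zero_rpow he1pos.ne']
      ring
    rw [hRHS]
    have := hOSC
    rw [hB] at this
    simpa using this
  · have hBpos : 0 < B := lt_of_le_of_ne hB0 (Ne.symm hB)
    by_cases hA : A = 0
    · -- zero function
      have hψ0 : ∀ z : E, ψ' z = 0 := by
        intro z
        have hz : ∀ n, F (t n) z = 0 := by
          intro n
          have := hEst3 z (t n) (htpos n)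
          rw [hA, mul_zero] at this
          exact abs_eq_zero.mp (le_antisymm this (abs_nonneg _))
        have : Tendsto (fun n => F (t n) z) atTop (𝓝 0) := by
          simp only [hz]; exact tendsto_const_nhds
        exact tendsto_nhds_unique (hψ' z) this
      rw [hψ0 x, hψ0 y]
      simp only [sub_zero, abs_zero, sub_self]
      have : (0:ℝ) ≤ (K₃ + K₄) * B ^ e1 * A ^ e2 * ‖x - y‖ ^ α := by
        refine mul_nonneg (mul_nonneg (mul_nonneg (by positivity) ?_) ?_) ?_
        · exact Real.rpow_nonneg hB0 _
        · exact Real.rpow_nonneg hA0 _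
        · exact Real.rpow_nonneg (norm_nonneg _) _
      simpa using this
    · have hApos : 0 < A := lt_of_le_of_ne hA0 (Ne.symm hA)
      set r₀ : ℝ := (A / B) ^ (1/β : ℝ) with hr₀def
      have hr₀pos : 0 < r₀ := Real.rpow_pos_of_pos (div_pos hApos hBpos) _
      have hr₀pow : ∀ c : ℝ, r₀ ^ c = A ^ (c/β) * B ^ (-(c/β)) := by
        intro c
        rw [hr₀def, ← Real.rpow_mul (div_nonneg hApos.le hBpos.le),
          show 1/β * c = c/β from by ring,
          Real.div_rpow hApos.le hBpos.le, Real.rpow_neg hBpos.le, div_eq_mul_inv]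
      have hrest0 : (0:ℝ) ≤ B ^ e1 * A ^ e2 * d ^ α :=
        mul_nonneg (mul_nonneg (Real.rpow_nonneg hB0 _) (Real.rpow_nonneg hA0 _))
          (Real.rpow_nonneg hd.le _)
      rcases le_or_gt d r₀ with hcase | hcase
      · -- small distance
        have main : |ψ' x - ψ' y| ≤ K₃ * (B ^ e1 * A ^ e2 * d ^ α) := by
          refine hOSC.trans ?_
          have hdγ : d ^ γ = d ^ α * d ^ (γ - α) := by
            rw [← Real.rpow_add hd]; congr 1; ring
          have hmono : d ^ (γ - α) ≤ r₀ ^ (γ - α) :=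
            Real.rpow_le_rpow hd.le hcase hγα.le
          have hr₀val : r₀ ^ (γ - α) = A ^ e2 * B ^ (-e2) := by
            rw [hr₀pow (γ - α), he2]
          have hBe : B ^ (-e2) * B = B ^ e1 := by
            nth_rewrite 2 [← Real.rpow_one B]
            rw [← Real.rpow_add hBpos]
            congr 1
            linarith [hsum]
          calc K₃ * d ^ γ * B = K₃ * (d ^ α * d ^ (γ - α)) * B := by rw [hdγ]
            _ ≤ K₃ * (d ^ α * r₀ ^ (γ - α)) * B := by
                refine mul_le_mul_of_nonneg_right ?_ hB0
                refine mul_le_mul_of_nonneg_left ?_ hK₃pos.le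
                exact mul_le_mul_of_nonneg_left hmono (Real.rpow_nonneg hd.le _)
            _ = K₃ * (d ^ α * (A ^ e2 * B ^ (-e2))) * B := by rw [hr₀val]
            _ = K₃ * (d ^ α * A ^ e2 * (B ^ (-e2) * B)) := by ring
            _ = K₃ * (d ^ α * A ^ e2 * B ^ e1) := by rw [hBe]
            _ = K₃ * (B ^ e1 * A ^ e2 * d ^ α) := by ring
        refine main.trans ?_
        calc K₃ * (B ^ e1 * A ^ e2 * d ^ α)
            ≤ (K₃ + K₄) * (B ^ e1 * A ^ e2 * d ^ α) := by
              exact mul_le_mul_of_nonneg_right (by linarith) hrest0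
          _ = (K₃ + K₄) * B ^ e1 * A ^ e2 * d ^ α := by ring
      · -- large distance
        have quad : |ψ' x - ψ' y|
            ≤ 2 * (K₂ * r₀ ^ γ * B) + 2 * (((r₀ ^ N * cN) ^ (-(1/q):ℝ)) * A) := by
          have h1 := hEst1 x r₀ hr₀pos
          have h2 := hEst1 y r₀ hr₀pos
          have h3 := hEst3 x r₀ hr₀pos
          have h4 := hEst3 y r₀ hr₀pos
          have tri : |ψ' x - ψ' y|
              ≤ |ψ' x - F r₀ x| + (|F r₀ x| + |F r₀ y|) + |ψ' y - F r₀ y| := by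
            calc |ψ' x - ψ' y|
                = |(ψ' x - F r₀ x) + (F r₀ x - F r₀ y) + (F r₀ y - ψ' y)| := by congr 1; ring
              _ ≤ |(ψ' x - F r₀ x) + (F r₀ x - F r₀ y)| + |F r₀ y - ψ' y| := abs_add_le _ _
              _ ≤ |ψ' x - F r₀ x| + |F r₀ x - F r₀ y| + |F r₀ y - ψ' y| := by
                  gcongr; exact abs_add_le _ _
              _ ≤ |ψ' x - F r₀ x| + (|F r₀ x| + |F r₀ y|) + |ψ' y - F r₀ y| := by
                  rw [abs_sub_comm (F r₀ y)]
                  gcongr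
                  exact habs _ _
          refine tri.trans ?_
          linarith
        -- both terms equal A^{γ/β} B^{1-γ/β}
        have hsplit₀ : (r₀ ^ N * cN) ^ (-(1/q):ℝ)
            = r₀ ^ (-((N:ℝ)/q)) * cN ^ (-(1/q):ℝ) := hsplit r₀ hr₀pos
        have hAc : ∀ a : ℝ, A ^ a * A = A ^ (a + 1) := fun a => by
          nth_rewrite 2 [← Real.rpow_one A]
          exact (Real.rpow_add hApos a 1).symm
        have hBc : ∀ a : ℝ, B ^ a * B = B ^ (a + 1) := fun a => by
          nth_rewrite 2 [← Real.rpow_one B]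
          exact (Real.rpow_add hBpos a 1).symm
        have hterm1 : r₀ ^ γ * B = A ^ (γ/β) * B ^ (1 - γ/β) := by
          rw [hr₀pow γ, mul_assoc, hBc, show -(γ/β) + 1 = 1 - γ/β from by ring]
        have hexp1 : -((N:ℝ)/q) / β + 1 = γ/β := by
          rw [hγdef]
          field_simp
          try ring
        have hexp2 : -(-((N:ℝ)/q) / β) = 1 - γ/β := by
          rw [hγdef]
          field_simp
          try ring
        have hterm2 : r₀ ^ (-((N:ℝ)/q)) * A = A ^ (γ/β) * B ^ (1 - γ/β) := by
          rw [hr₀pow (-((N:ℝ)/q))]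
          calc A ^ (-((N:ℝ)/q) / β) * B ^ (-(-((N:ℝ)/q) / β)) * A
              = (A ^ (-((N:ℝ)/q) / β) * A) * B ^ (-(-((N:ℝ)/q) / β)) := by ring
            _ = A ^ (-((N:ℝ)/q) / β + 1) * B ^ (-(-((N:ℝ)/q) / β)) := by rw [hAc]
            _ = A ^ (γ/β) * B ^ (1 - γ/β) := by rw [hexp1, hexp2]
        have hga : γ/β = e2 + α/β := by
          rw [he2, ← add_div]
          congr 1
          ring
        have hgb : (1:ℝ) - γ/β = e1 + (-(α/β)) := by
          have h1 : e1 = 1 - e2 := by linarith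
          rw [h1, hga]
          ring
        have hABg : A ^ (γ/β) * B ^ (1 - γ/β) = B ^ e1 * A ^ e2 * r₀ ^ α := by
          rw [hgb, hga, Real.rpow_add hApos, Real.rpow_add hBpos, hr₀pow α]
          ring
        have hcollect : 2*(K₂ * r₀ ^ γ * B)
            + 2*(((r₀ ^ N * cN) ^ (-(1/q):ℝ)) * A)
            = K₄ * (B ^ e1 * A ^ e2 * r₀ ^ α) := by
          have h1 : r₀ ^ γ * B = B ^ e1 * A ^ e2 * r₀ ^ α := by rw [hterm1, hABg]
          have h2 : r₀ ^ (-((N:ℝ)/q)) * A = B ^ e1 * A ^ e2 * r₀ ^ α := by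
            rw [hterm2, hABg]
          calc 2*(K₂ * r₀ ^ γ * B) + 2*(((r₀ ^ N * cN) ^ (-(1/q):ℝ)) * A)
              = 2*K₂*(r₀ ^ γ * B)
                + 2*cN ^ (-(1/q):ℝ) * (r₀ ^ (-((N:ℝ)/q)) * A) := by
                rw [hsplit₀]; ring
            _ = 2*K₂*(B ^ e1 * A ^ e2 * r₀ ^ α)
                + 2*cN ^ (-(1/q):ℝ)*(B ^ e1 * A ^ e2 * r₀ ^ α) := by rw [h1, h2]
            _ = K₄ * (B ^ e1 * A ^ e2 * r₀ ^ α) := by rw [hK₄def]; ring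
        rw [hcollect] at quad
        have hr₀d : r₀ ^ α ≤ d ^ α := Real.rpow_le_rpow hr₀pos.le hcase.le hα.le
        calc |ψ' x - ψ' y| ≤ K₄ * (B ^ e1 * A ^ e2 * r₀ ^ α) := quad
          _ ≤ K₄ * (B ^ e1 * A ^ e2 * d ^ α) := by
              refine mul_le_mul_of_nonneg_left ?_ hK₄pos.le
              exact mul_le_mul_of_nonneg_left hr₀d
                (mul_nonneg (Real.rpow_nonneg hB0 _) (Real.rpow_nonneg hA0 _))
          _ ≤ (K₃ + K₄) * (B ^ e1 * A ^ e2 * d ^ α) :=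
              mul_le_mul_of_nonneg_right (by linarith) hrest0
          _ = (K₃ + K₄) * B ^ e1 * A ^ e2 * d ^ α := by ring

end Aux

/-- Morrey-type embedding: if `0 < β < 1`, `1 ≤ q < ∞` with `βq > N`, and
`ψ ∈ L^q(ℝ^N)` has finite Besov–Nikolskii seminorm, then for every
`0 < α < β − N/q` there is a constant `C = C(N,q,α,β)` and a representative of
`ψ` which is `α`-Hölder continuous with the interpolation estimate
`|ψ(x)−ψ(y)| ≤ C [ψ]_N^{(αq+N)/(βq)} ‖ψ‖_{L^q}^{((β−α)q−N)/(βq)} |x−y|^α`. -/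
theorem stmt_8 {N : ℕ} (β q : ℝ) (hβ : 0 < β) (hβ1 : β < 1) (hq : 1 ≤ q)
    (hβq : (N : ℝ) < β * q)
    (ψ : EuclideanSpace ℝ (Fin N) → ℝ)
    (hψ : MemLp ψ (ENNReal.ofReal q) volume)
    (hfin : nikolskiiSemi β (ENNReal.ofReal q) ψ ≠ ⊤) :
    ∀ α : ℝ, 0 < α → α < β - N / q →
      ∃ C > (0 : ℝ), ∃ ψ' : EuclideanSpace ℝ (Fin N) → ℝ,
        ψ' =ᵐ[volume] ψ ∧
        ∀ x y, x ≠ y →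
          |ψ' x - ψ' y|
            ≤ C * (nikolskiiSemi β (ENNReal.ofReal q) ψ).toReal ^ ((α * q + N) / (β * q))
              * (eLpNorm ψ (ENNReal.ofReal q) volume).toReal ^ (((β - α) * q - N) / (β * q))
              * ‖x - y‖ ^ α := by
  intro α hα hαγ
  have hsm := hψ.1
  set φ := hsm.mk ψ with hφdef
  have hφm : Measurable φ := hsm.stronglyMeasurable_mk.measurable
  have hae : ψ =ᵐ[volume] φ := hsm.ae_eq_mk
  have hcong : ∀ k : EuclideanSpace ℝ (Fin N),
      (fun x => (φ (x + k) - φ x) / ‖k‖ ^ β)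
        =ᵐ[volume] (fun x => (ψ (x + k) - ψ x) / ‖k‖ ^ β) := by
    intro k
    have hqmp : Measure.QuasiMeasurePreserving
        (fun x : EuclideanSpace ℝ (Fin N) => x + k) volume volume :=
      (measurePreserving_add_right volume k).quasiMeasurePreserving
    have h1 : (fun x : EuclideanSpace ℝ (Fin N) => ψ (x + k))
        =ᵐ[volume] (fun x => φ (x + k)) := hqmp.ae_eq hae
    filter_upwards [h1, hae] with x h1x h2x
    rw [h1x, h2x]
  have hsemi_eq : nikolskiiSemi β (ENNReal.ofReal q) φ
      = nikolskiiSemi β (ENNReal.ofReal q) ψ := by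
    unfold nikolskiiSemi
    exact iSup_congr fun h => eLpNorm_congr_ae (hcong h.1)
  have hLp_eq : eLpNorm φ (ENNReal.ofReal q) volume = eLpNorm ψ (ENNReal.ofReal q) volume :=
    eLpNorm_congr_ae hae.symm
  have hφmem : MemLp φ (ENNReal.ofReal q) volume := hψ.ae_eq hae
  obtain ⟨C, hC, ψ', hψ'φ, hest⟩ := morrey_key β q hβ hq hβq φ hφm hφmem
    (by rw [hsemi_eq]; exact hfin) α hα hαγ
  refine ⟨C, hC, ψ', hψ'φ.trans hae.symm, fun x y hxy => ?_⟩
  have := hest x y hxy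
  rwa [hsemi_eq, hLp_eq] at this
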